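/- Let ℓ be a prime, r ≥ 1, Π a closed subgroup of GL_r(ℤ_ℓ), and C ⊆ Π a closed subgroup which is not open in Π. For each n ≥ 1, let Π_n and C_n denote the images of Π and C under the reduction map GL_r(ℤ_ℓ) → GL_r(ℤ/ℓⁿ). Then the index [Π_n : C_n] tends to +∞ as n → +∞. -/

import Mathlib

open Matrix

/-- Reduction modulo `ℓ ^ n` on `GL_r(ℤ_ℓ)`. -/
noncomputable def glRed (l : ℕ) [Fact (Nat.Prime l)] (r n : ℕ) :
    GL (Fin r) ℤ_[l] →* GL (Fin r) (ZMod (l ^ n)) :=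
  Matrix.GeneralLinearGroup.map (PadicInt.toZModPow n)

/-- `Π(n)`: the kernel of reduction modulo `ℓ ^ n` restricted to the closed subgroup `Π`,
viewed as a subgroup of `Π`. -/
noncomputable def levelSubgroup (l : ℕ) [Fact (Nat.Prime l)] (r : ℕ)
    (P : Subgroup (GL (Fin r) ℤ_[l])) (n : ℕ) : Subgroup ↥P :=
  ((glRed l r n).comp P.subtype).ker

section Aux

open Filter Topology

variable (l : ℕ) [Fact (Nat.Prime l)] (r : ℕ)

/-- Compatibility of reductions: mod `l^m` factors through mod `l^n` for `m ≤ n`. -/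
lemma glRed_one_of {m n : ℕ} (h : m ≤ n) (y : GL (Fin r) ℤ_[l])
    (hy : glRed l r n y = 1) : glRed l r m y = 1 := by
  have hcomp : glRed l r m =
      (Matrix.GeneralLinearGroup.map (ZMod.castHom (pow_dvd_pow l h) (ZMod (l ^ m)))).comp
        (glRed l r n) := by
    rw [glRed, glRed, ← Matrix.GeneralLinearGroup.map_comp,
      PadicInt.zmod_cast_comp_toZModPow m n h]
  rw [hcomp, MonoidHom.comp_apply, hy, _root_.map_one]

/-- Entries of elements of the kernel of reduction are close to those of the identity. -/
lemma mem_ker_norm {n : ℕ} {x : GL (Fin r) ℤ_[l]} (hx : glRed l r n x = 1) (i j : Fin r) :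
    ‖(x : Matrix (Fin r) (Fin r) ℤ_[l]) i j - (1 : Matrix (Fin r) (Fin r) ℤ_[l]) i j‖
      ≤ (l : ℝ) ^ (-(n : ℤ)) := by
  rw [PadicInt.norm_le_pow_iff_mem_span_pow, ← PadicInt.ker_toZModPow, RingHom.mem_ker,
    map_sub, sub_eq_zero]
  have h1 : PadicInt.toZModPow n ((x : Matrix (Fin r) (Fin r) ℤ_[l]) i j)
      = (1 : Matrix (Fin r) (Fin r) (ZMod (l ^ n))) i j := by
    have := congrArg (fun u : GL (Fin r) (ZMod (l ^ n)) =>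
      (u : Matrix (Fin r) (Fin r) (ZMod (l ^ n))) i j) hx
    simpa [glRed] using this
  rw [h1]
  rcases eq_or_ne i j with h | h <;> simp [Matrix.one_apply, h]

/-- Every neighborhood of the identity matrix contains a `p^n` entrywise ball. -/
lemma matrix_nhds_pow (W : Set (Matrix (Fin r) (Fin r) ℤ_[l]))
    (hW : W ∈ 𝓝 (1 : Matrix (Fin r) (Fin r) ℤ_[l])) :
    ∃ n : ℕ, ∀ A : Matrix (Fin r) (Fin r) ℤ_[l],
      (∀ i j, ‖A i j - (1 : Matrix (Fin r) (Fin r) ℤ_[l]) i j‖ ≤ (l : ℝ) ^ (-(n : ℤ))) →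
        A ∈ W := by
  have h' : W ∈ @nhds (Fin r → Fin r → ℤ_[l]) _
      (fun i j => (1 : Matrix (Fin r) (Fin r) ℤ_[l]) i j) := hW
  replace h' := Metric.mem_nhds_iff.mp h'
  obtain ⟨ε, hε, hball⟩ := h'
  have hl : (1 : ℝ) < l := by exact_mod_cast (Fact.out : l.Prime).one_lt
  obtain ⟨n, hn⟩ : ∃ n : ℕ, (l : ℝ) ^ (-(n : ℤ)) < ε := by
    obtain ⟨n, hn⟩ := exists_pow_lt_of_lt_one hε
      (by rw [inv_lt_one_iff₀]; right; exact hl : (l : ℝ)⁻¹ < 1)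
    exact ⟨n, by rw [_root_.zpow_neg, zpow_natCast, ← inv_pow]; exact hn⟩
  refine ⟨n, fun A hA => ?_⟩
  apply hball
  have hr0 : (0 : ℝ) ≤ (l : ℝ) ^ (-(n : ℤ)) := by positivity
  have hd : @dist (Fin r → Fin r → ℤ_[l]) _ (fun i j => A i j)
      (fun i j => (1 : Matrix (Fin r) (Fin r) ℤ_[l]) i j) ≤ (l : ℝ) ^ (-(n : ℤ)) := by
    rw [dist_pi_le_iff hr0]
    intro i
    rw [dist_pi_le_iff hr0]
    intro j
    rw [dist_eq_norm]
    exact hA i j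
  exact Metric.mem_ball.mpr (lt_of_le_of_lt hd hn)

/-- The kernels of the reductions form a neighborhood basis of `1` in `GL_r(ℤ_l)`. -/
lemma exists_ker_subset {V : Set (GL (Fin r) ℤ_[l])} (hV : V ∈ 𝓝 (1 : GL (Fin r) ℤ_[l])) :
    ∃ n : ℕ, ((glRed l r n).ker : Set (GL (Fin r) ℤ_[l])) ⊆ V := by
  rw [Units.isInducing_embedProduct.nhds_eq_comap, Filter.mem_comap] at hV
  obtain ⟨W, hW, hWV⟩ := hV
  have hemb : Units.embedProduct _ (1 : GL (Fin r) ℤ_[l])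
      = ((1 : Matrix (Fin r) (Fin r) ℤ_[l]),
         MulOpposite.op (1 : Matrix (Fin r) (Fin r) ℤ_[l])) := rfl
  rw [hemb, mem_nhds_prod_iff] at hW
  obtain ⟨u, hu, v, hv, huv⟩ := hW
  have hv' : MulOpposite.op ⁻¹' v ∈ 𝓝 (1 : Matrix (Fin r) (Fin r) ℤ_[l]) :=
    MulOpposite.continuous_op.continuousAt.preimage_mem_nhds hv
  obtain ⟨n, hn⟩ := matrix_nhds_pow l r (u ∩ MulOpposite.op ⁻¹' v) (Filter.inter_mem hu hv')
  refine ⟨n, fun x hx => ?_⟩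
  have hx1 : glRed l r n x = 1 := hx
  have hxinv : glRed l r n x⁻¹ = 1 := by rw [map_inv, hx1, inv_one]
  have h1 := hn (x : Matrix (Fin r) (Fin r) ℤ_[l]) (fun i j => mem_ker_norm l r hx1 i j)
  have h2 := hn ((x⁻¹ : GL (Fin r) ℤ_[l]) : Matrix (Fin r) (Fin r) ℤ_[l])
    (fun i j => mem_ker_norm l r hxinv i j)
  apply hWV
  have : Units.embedProduct _ x ∈ u ×ˢ v :=
    Set.mk_mem_prod h1.1 (Set.mem_preimage.mp h2.2)
  exact huv this

end Aux

open Pointwise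

open Filter in
/-- If C is a closed but not open subgroup of the closed subgroup Pi of GL_r(Z_l), and
Pi_n, C_n denote the images of Pi and C under reduction modulo l^n, then the index
[Pi_n : C_n] tends to infinity with n. -/
theorem index_image_tendsto_atTop (l : ℕ) [Fact (Nat.Prime l)] (r : ℕ)
    (P : Subgroup (GL (Fin r) ℤ_[l])) (hP : IsClosed (P : Set (GL (Fin r) ℤ_[l])))
    (C : Subgroup ↥P) (hCclosed : IsClosed (C : Set ↥P)) (hCopen : ¬ IsOpen (C : Set ↥P)) :
    Tendsto
      (fun n : ℕ =>
        (((C.map P.subtype).map (glRed l r n)).subgroupOf (P.map (glRed l r n))).index)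
      atTop atTop := by
  set K : ℕ → Subgroup ↥P := levelSubgroup l r P with hK
  set a : ℕ → ℕ := fun n => (C ⊔ K n).index with ha
  -- identification of the index
  have key : ∀ n : ℕ,
      (((C.map P.subtype).map (glRed l r n)).subgroupOf (P.map (glRed l r n))).index = a n := by
    intro n
    have h1 : (C.map P.subtype).map (glRed l r n) = C.map ((glRed l r n).comp P.subtype) :=
      Subgroup.map_map C (glRed l r n) P.subtype
    have h2 : P.map (glRed l r n) = ((glRed l r n).comp P.subtype).range := by
      rw [MonoidHom.range_comp, Subgroup.range_subtype]
    rw [h1, h2]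
    have h3 : ((C.map ((glRed l r n).comp P.subtype)).subgroupOf
        ((glRed l r n).comp P.subtype).range).index
        = (C.map ((glRed l r n).comp P.subtype)).relIndex
            ((glRed l r n).comp P.subtype).range := rfl
    rw [h3, ← Subgroup.index_comap, Subgroup.comap_map_eq]
    rfl
  -- antitonicity of the level subgroups
  have hKanti : ∀ {m n : ℕ}, m ≤ n → K n ≤ K m := by
    intro m n h x hx
    have hx' : glRed l r n (P.subtype x) = 1 := hx
    exact glRed_one_of l r h (P.subtype x) hx'
  -- all indices are nonzero
  have hKind : ∀ n : ℕ, (K n).index ≠ 0 := by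
    intro n
    haveI : NeZero (l ^ n) := ⟨pow_ne_zero n (Fact.out : l.Prime).ne_zero⟩
    haveI : Finite (Matrix (Fin r) (Fin r) (ZMod (l ^ n))) :=
      inferInstanceAs (Finite (Fin r → Fin r → ZMod (l ^ n)))
    have : (K n).index = Nat.card ((glRed l r n).comp P.subtype).range :=
      Subgroup.index_ker _
    rw [this]
    exact Nat.card_pos.ne'
  have haneq : ∀ n : ℕ, a n ≠ 0 := by
    intro n h0
    exact hKind n (Nat.eq_zero_of_zero_dvd (h0 ▸ Subgroup.index_dvd_of_le le_sup_right))
  -- monotonicity of the index sequence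
  have hmono : Monotone a := by
    intro m n h
    exact Nat.le_of_dvd (Nat.pos_of_ne_zero (haneq n))
      (Subgroup.index_dvd_of_le (sup_le_sup_left (hKanti h) C))
  have hfun : (fun n : ℕ =>
      (((C.map P.subtype).map (glRed l r n)).subgroupOf (P.map (glRed l r n))).index) = a :=
    funext key
  rw [hfun]
  apply tendsto_atTop_atTop_of_monotone hmono
  by_contra hb
  push_neg at hb
  obtain ⟨b, hb⟩ := hb
  -- the sequence stabilizes
  have hbdd : BddAbove (Set.range a) := ⟨b, by rintro _ ⟨n, rfl⟩; exact (hb n).le⟩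
  obtain ⟨N, hN⟩ := Nat.sSup_mem (Set.range_nonempty a) hbdd
  have hstab : ∀ n : ℕ, N ≤ n → C ⊔ K N ≤ C ⊔ K n := by
    intro n hn
    have hle : C ⊔ K n ≤ C ⊔ K N := sup_le_sup_left (hKanti hn) C
    have heq : a n = a N := le_antisymm (hN ▸ le_csSup hbdd ⟨n, rfl⟩) (hmono hn)
    have hmul := Subgroup.relIndex_mul_index hle
    have h1 : (C ⊔ K n).relIndex (C ⊔ K N) = 1 := by
      refine mul_right_cancel₀ (haneq N) ?_
      rw [one_mul, hmul]
      exact heq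
    exact Subgroup.relIndex_eq_one.mp h1
  -- the stable subgroup is contained in C
  have hsubC : C ⊔ K N ≤ C := by
    intro x hx
    have hxcl : x ∈ closure (C : Set ↥P) := by
      rw [mem_closure_iff_nhds]
      intro U hU
      have hU1 : (fun y : ↥P => x * y) ⁻¹' U ∈ nhds (1 : ↥P) := by
        have hc : ContinuousAt (fun y : ↥P => x * y) 1 := (continuous_mul_left x).continuousAt
        apply hc.preimage_mem_nhds
        rwa [mul_one]
      rw [nhds_induced] at hU1
      obtain ⟨V, hV, hVs⟩ := hU1
      have hV1 : V ∈ nhds (1 : GL (Fin r) ℤ_[l]) := by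
        have : ((1 : ↥P) : GL (Fin r) ℤ_[l]) = 1 := rfl
        rwa [this] at hV
      obtain ⟨n, hker⟩ := exists_ker_subset l r hV1
      set m := max n N with hm
      have hxm : x ∈ C ⊔ K m := hstab m (le_max_right n N) hx
      haveI : (K m).Normal := MonoidHom.normal_ker _
      have hxm' : x ∈ ((C : Set ↥P) * (K m : Set ↥P)) := by
        rw [← Subgroup.mul_normal]
        exact hxm
      obtain ⟨c, hc, k, hk, hck⟩ := hxm'
      have hkinv : k⁻¹ ∈ K m := (K m).inv_mem hk
      have hkker : ((k⁻¹ : ↥P) : GL (Fin r) ℤ_[l]) ∈ (glRed l r n).ker := by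
        have h1 : glRed l r m (P.subtype k⁻¹) = 1 := hkinv
        exact glRed_one_of l r (le_max_left n N) _ h1
      have hmemU : x * k⁻¹ ∈ U := hVs (hker hkker)
      have hc_eq : c = x * k⁻¹ := by
        rw [← hck, mul_assoc, mul_inv_cancel, mul_one]
      exact ⟨c, by rw [hc_eq]; exact hmemU, hc⟩
    rwa [hCclosed.closure_eq] at hxcl
  -- conclude
  have hCiN : C.index ≠ 0 := by
    intro h0
    exact haneq N (Nat.eq_zero_of_zero_dvd (h0 ▸ Subgroup.index_dvd_of_le hsubC))
  haveI : C.FiniteIndex := ⟨hCiN⟩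
  exact hCopen (Subgroup.isOpen_of_isClosed_of_finiteIndex C hCclosed)
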